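/- Let A and B be nonempty finite types and let Q̂ be the convex cone of Hermitian matrices indexed by A × B generated by the set of states over time { (ρ ⊗ₖ 1) ★ J : ρ a state on A, J a Jamiołkowski matrix from A to B } (i.e. the set of all finite nonnegative linear combinations of such matrices). Then, in the real inner product space of Hermitian matrices indexed by A × B with ⟪X, Y⟫ = Re Tr(X·Y): (i) Q̂ is pointed, i.e. if X ∈ Q̂ and −X ∈ Q̂ then X = 0; (ii) Q̂ is spanning, i.e. every Hermitian matrix indexed by A × B is a difference of two elements of Q̂; (iii) the dual cone Q̂* = { X Hermitian : ∀ Q ∈ Q̂, Re Tr(X·Q) ≥ 0 } is likewise pointed and spanning. -/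

import Mathlib

open Matrix
open scoped Kronecker ComplexOrder

noncomputable def jordan {n : Type*} [Fintype n] (X Y : Matrix n n ℂ) : Matrix n n ℂ :=
  (2 : ℂ)⁻¹ • (X * Y + Y * X)

noncomputable def trB {A B : Type*} [Fintype B] (M : Matrix (A × B) (A × B) ℂ) : Matrix A A ℂ :=
  Matrix.of fun i j => ∑ k, M (i, k) (j, k)

noncomputable def trA {A B : Type*} [Fintype A] (M : Matrix (A × B) (A × B) ℂ) : Matrix B B ℂ :=
  Matrix.of fun k l => ∑ i, M (i, k) (i, l)

def ptA {A B : Type*} (M : Matrix (A × B) (A × B) ℂ) : Matrix (A × B) (A × B) ℂ :=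
  Matrix.of fun p q => M (q.1, p.2) (p.1, q.2)

def swap (A : Type*) [DecidableEq A] : Matrix (A × A) (A × A) ℂ :=
  Matrix.of fun p q => if p.1 = q.2 ∧ p.2 = q.1 then 1 else 0

def IsState {A : Type*} [Fintype A] (ρ : Matrix A A ℂ) : Prop :=
  ρ.PosSemidef ∧ ρ.trace = 1

def IsJam {A B : Type*} [Fintype A] [Fintype B] [DecidableEq A]
    (J : Matrix (A × B) (A × B) ℂ) : Prop :=
  (ptA J).PosSemidef ∧ trB J = 1

noncomputable def cost {A B : Type*} [Fintype A] [Fintype B] [DecidableEq A] [DecidableEq B]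
    (K : Matrix (A × B) (A × B) ℂ) (ρ : Matrix A A ℂ) (σ : Matrix B B ℂ) : ℝ :=
  sInf { r : ℝ | ∃ J : Matrix (A × B) (A × B) ℂ, IsJam J ∧
      trA ((ρ ⊗ₖ (1 : Matrix B B ℂ)) * J) = σ ∧
      r = (Matrix.trace (K * jordan (ρ ⊗ₖ (1 : Matrix B B ℂ)) J)).re }

section Aux

variable {n : Type*} [Fintype n] [DecidableEq n]

lemma real_smul_eq (r : ℝ) (M : Matrix n n ℂ) : r • M = (r : ℂ) • M := by
  ext i j; simp [Complex.real_smul]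

lemma psd_smul {M : Matrix n n ℂ} (hM : M.PosSemidef) {r : ℝ} (hr : 0 ≤ r) :
    ((r : ℂ) • M).PosSemidef := by
  refine PosSemidef.of_dotProduct_mulVec_nonneg ?_ ?_
  · unfold Matrix.IsHermitian
    rw [conjTranspose_smul, hM.1.eq]
    congr 1
    simp
  · intro x
    rw [smul_mulVec, dotProduct_smul]
    exact mul_nonneg (Complex.zero_le_real.mpr hr) (hM.dotProduct_mulVec_nonneg x)

lemma herm_smul {M : Matrix n n ℂ} (hM : M.IsHermitian) (r : ℝ) :
    ((r : ℂ) • M).IsHermitian := by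
  unfold Matrix.IsHermitian
  rw [conjTranspose_smul, hM.eq]
  congr 1
  simp

lemma exists_shift {N : Matrix n n ℂ} (hN : N.IsHermitian) :
    ∃ c : ℝ, 0 ≤ c ∧ (N + (c : ℂ) • 1).PosSemidef := by
  obtain ⟨c₀, hc₀⟩ := Finite.exists_le (fun i => -hN.eigenvalues i)
  refine ⟨max c₀ 0, le_max_right _ _, ?_⟩
  set c := max c₀ 0 with hc
  set U : Matrix n n ℂ := (hN.eigenvectorUnitary : Matrix n n ℂ) with hU
  have hUU : U * star U = 1 := Matrix.mem_unitaryGroup_iff.mp hN.eigenvectorUnitary.2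
  have key : N + (c : ℂ) • 1 =
      U * diagonal (fun i => ((hN.eigenvalues i + c : ℝ) : ℂ)) * star U := by
    conv_lhs => rw [hN.spectral_theorem]
    have h1 : (c : ℂ) • (1 : Matrix n n ℂ) = U * ((c : ℂ) • 1) * star U := by
      rw [Matrix.mul_smul, smul_mul_assoc, mul_one, hUU]
    rw [Unitary.conjStarAlgAut_apply, h1, ← add_mul, ← mul_add]
    congr 2
    ext i j
    by_cases h : i = j <;>
      simp [h, Matrix.diagonal_apply, Matrix.one_apply, Function.comp, Complex.ofReal_add]
  rw [key]
  have hd : (diagonal (fun i => ((hN.eigenvalues i + c : ℝ) : ℂ))).PosSemidef := by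
    refine Matrix.posSemidef_diagonal_iff.mpr fun i => ?_
    rw [Complex.zero_le_real]
    have := hc₀ i
    have : -hN.eigenvalues i ≤ c := le_trans this (le_max_left _ _)
    linarith
  simpa [Matrix.star_eq_conjTranspose] using hd.mul_mul_conjTranspose_same U

lemma psd_diag_re_nonneg {S : Matrix n n ℂ} (hS : S.PosSemidef) (p : n) :
    0 ≤ (S p p).re ∧ (S p p).im = 0 := by
  have h := hS.dotProduct_mulVec_nonneg (Pi.single p 1)
  have hx : dotProduct (star (Pi.single p (1:ℂ))) (S *ᵥ Pi.single p 1) = S p p := by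
    rw [mulVec_single]
    simp [dotProduct, Pi.single_apply, apply_ite, Finset.sum_ite_eq']
  rw [hx] at h
  rw [Complex.le_def] at h
  simp at h
  exact ⟨h.1, h.2.symm⟩

lemma psd_trace_re_nonneg {S : Matrix n n ℂ} (hS : S.PosSemidef) : 0 ≤ S.trace.re := by
  rw [Matrix.trace, Complex.re_sum]
  exact Finset.sum_nonneg fun i _ => (psd_diag_re_nonneg hS i).1

lemma herm_trace_real {S : Matrix n n ℂ} (hS : S.IsHermitian) : S.trace = (S.trace.re : ℂ) := by
  rw [Matrix.trace]
  rw [Complex.re_sum]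
  push_cast
  congr 1
  funext i
  have := hS.apply i i
  have him : (S i i).im = 0 := by
    have h2 : (starRingEnd ℂ) (S i i) = S i i := this
    rw [Complex.conj_eq_iff_im] at h2
    exact h2
  exact Complex.ext rfl (by simp [him])

lemma psd_abs_entry_le {S : Matrix n n ℂ} (hS : S.PosSemidef) (p q : n) :
    ‖S p q‖ ≤ S.trace.re := by
  obtain ⟨Bm, hB⟩ : ∃ Bm : Matrix n n ℂ, S = Bmᴴ * Bm := by
    open scoped MatrixOrder in
    obtain ⟨B, hB'⟩ := CStarAlgebra.nonneg_iff_eq_star_mul_self.mp hS.nonneg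
    exact ⟨B, hB'⟩
  have hdiag : ∀ r, 0 ≤ (S r r).re := fun r => (psd_diag_re_nonneg hS r).1
  have htr : 0 ≤ S.trace.re := psd_trace_re_nonneg hS
  have hSpp : ∀ r, (S r r).re = ∑ k, ‖Bm k r‖ ^ 2 := by
    intro r
    rw [hB]
    rw [Matrix.mul_apply, Complex.re_sum]
    congr 1
    funext k
    rw [Matrix.conjTranspose_apply]
    rw [Complex.star_def, Complex.conj_mul']
    rw [← Complex.ofReal_pow, Complex.ofReal_re]
  have key : ‖S p q‖ ≤ ((S p p).re + (S q q).re) / 2 := by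
    have hSpq : S p q = ∑ k, (starRingEnd ℂ) (Bm k p) * Bm k q := by
      rw [hB]; rw [Matrix.mul_apply]; simp [Matrix.conjTranspose_apply]
    rw [hSpq, hSpp, hSpp]
    calc ‖∑ k, (starRingEnd ℂ) (Bm k p) * Bm k q‖
        ≤ ∑ k, ‖(starRingEnd ℂ) (Bm k p) * Bm k q‖ :=
          norm_sum_le _ _
      _ ≤ ∑ k, (‖Bm k p‖ ^ 2 + ‖Bm k q‖ ^ 2) / 2 := by
          refine Finset.sum_le_sum fun k _ => ?_
          rw [norm_mul, Complex.norm_conj]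
          nlinarith [sq_nonneg (‖Bm k p‖ - ‖Bm k q‖),
            norm_nonneg (Bm k p), norm_nonneg (Bm k q)]
      _ = ((∑ k, ‖Bm k p‖ ^ 2) + ∑ k, ‖Bm k q‖ ^ 2) / 2 := by
          rw [← Finset.sum_add_distrib, Finset.sum_div]
  have h2 : (S p p).re + (S q q).re ≤ 2 * S.trace.re := by
    have htr2 : S.trace.re = ∑ r, (S r r).re := by rw [Matrix.trace, Complex.re_sum]; rfl
    rcases eq_or_ne p q with h | h
    · subst h
      have : (S p p).re ≤ ∑ r, (S r r).re :=
        Finset.single_le_sum (fun r _ => hdiag r) (Finset.mem_univ p)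
      rw [htr2]; linarith
    · have : ∑ r ∈ ({p, q} : Finset n), (S r r).re ≤ ∑ r, (S r r).re :=
        Finset.sum_le_sum_of_subset_of_nonneg (Finset.subset_univ _)
          (fun r _ _ => hdiag r)
      rw [Finset.sum_pair h] at this
      rw [htr2]; linarith
  linarith

end Aux


section Jord
variable {n : Type*} [Fintype n] [DecidableEq n]

lemma jordan_herm {X Y : Matrix n n ℂ} (hX : X.IsHermitian) (hY : Y.IsHermitian) :
    (jordan X Y).IsHermitian := by
  unfold Matrix.IsHermitian jordan
  rw [conjTranspose_smul, conjTranspose_add, conjTranspose_mul, conjTranspose_mul,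
    hX.eq, hY.eq]
  rw [add_comm (Y * X) (X * Y)]
  congr 1
  simp

lemma jordan_smul_one (z : ℂ) (J : Matrix n n ℂ) : jordan (z • 1) J = z • J := by
  unfold jordan
  rw [smul_mul_assoc, one_mul, Matrix.mul_smul, mul_one]
  rw [← smul_add, smul_smul]
  rw [show (2:ℂ)⁻¹ * z = z * 2⁻¹ by ring, ← smul_smul]
  congr 1
  rw [show (J + J : Matrix n n ℂ) = (2:ℂ) • J by rw [two_smul]]
  rw [smul_smul]
  norm_num

lemma trace_jordan (X Y : Matrix n n ℂ) : (jordan X Y).trace = (X * Y).trace := by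
  unfold jordan
  rw [trace_smul, trace_add, Matrix.trace_mul_comm Y X, ← two_smul ℂ]
  rw [smul_smul]
  norm_num

end Jord

section AB
variable {A B : Type*} [Fintype A] [Fintype B] [DecidableEq A] [DecidableEq B]

lemma trB_add (M N : Matrix (A × B) (A × B) ℂ) : trB (M + N) = trB M + trB N := by
  ext i j; simp [trB, Finset.sum_add_distrib]

lemma trB_smul (z : ℂ) (M : Matrix (A × B) (A × B) ℂ) : trB (z • M) = z • trB M := by
  ext i j; simp [trB, Finset.mul_sum]

lemma trB_one : trB (1 : Matrix (A × B) (A × B) ℂ) = (Fintype.card B : ℂ) • 1 := by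
  ext i j
  simp only [trB, Matrix.of_apply, Matrix.one_apply, Matrix.smul_apply, smul_eq_mul,
    Prod.mk.injEq]
  by_cases h : i = j <;> simp [h, Finset.card_univ]

lemma trB_kron_one (G : Matrix A A ℂ) :
    trB (G ⊗ₖ (1 : Matrix B B ℂ)) = (Fintype.card B : ℂ) • G := by
  ext i j
  simp [trB, Matrix.one_apply, Finset.card_univ, mul_comm]

lemma ptA_add (M N : Matrix (A × B) (A × B) ℂ) : ptA (M + N) = ptA M + ptA N := by
  ext p q; simp [ptA]

lemma ptA_smul (z : ℂ) (M : Matrix (A × B) (A × B) ℂ) : ptA (z • M) = z • ptA M := by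
  ext p q; simp [ptA]

lemma ptA_one : ptA (1 : Matrix (A × B) (A × B) ℂ) = 1 := by
  ext p q
  simp only [ptA, Matrix.of_apply, Matrix.one_apply, Prod.mk.injEq]
  by_cases h1 : p.1 = q.1 <;> by_cases h2 : p.2 = q.2 <;>
    simp [h1, h2, eq_comm, Prod.ext_iff] <;> tauto

lemma ptA_ptA (M : Matrix (A × B) (A × B) ℂ) : ptA (ptA M) = M := by
  ext p q; simp [ptA]

lemma ptA_herm {M : Matrix (A × B) (A × B) ℂ} (h : M.IsHermitian) : (ptA M).IsHermitian := by
  ext p q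
  simp only [conjTranspose_apply, ptA, Matrix.of_apply]
  exact h.apply _ _

lemma herm_of_ptA {M : Matrix (A × B) (A × B) ℂ} (h : (ptA M).IsHermitian) : M.IsHermitian := by
  have := ptA_herm h
  rwa [ptA_ptA] at this

lemma trace_trB (M : Matrix (A × B) (A × B) ℂ) : (trB M).trace = M.trace := by
  simp [Matrix.trace, trB, Matrix.diag, Fintype.sum_prod_type]

lemma trace_ptA (M : Matrix (A × B) (A × B) ℂ) : (ptA M).trace = M.trace := by
  simp [Matrix.trace, ptA, Matrix.diag]

lemma kron_one_herm {ρ : Matrix A A ℂ} (h : ρ.IsHermitian) :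
    (ρ ⊗ₖ (1 : Matrix B B ℂ)).IsHermitian := by
  ext p q
  rcases p with ⟨i, k⟩; rcases q with ⟨j, l⟩
  simp only [conjTranspose_apply, Matrix.kroneckerMap_apply, Matrix.one_apply, star_mul']
  rw [← h.apply j i]
  by_cases hkl : k = l <;> simp [hkl, eq_comm, mul_comm]

lemma trace_kron_mul (ρ : Matrix A A ℂ) (J : Matrix (A × B) (A × B) ℂ) :
    ((ρ ⊗ₖ (1 : Matrix B B ℂ)) * J).trace = (ρ * trB J).trace := by
  simp only [Matrix.trace, Matrix.diag, Matrix.mul_apply, Matrix.kroneckerMap_apply,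
    Matrix.one_apply, trB, Matrix.of_apply, Fintype.sum_prod_type, mul_ite, mul_one, mul_zero,
    ite_mul, zero_mul, Finset.sum_ite_eq, Finset.mem_univ, if_true, Finset.mul_sum]
  exact Finset.sum_congr rfl fun i _ => Finset.sum_comm

lemma gen_trace {ρ : Matrix A A ℂ} {J : Matrix (A × B) (A × B) ℂ}
    (hρ : IsState ρ) (hJ : IsJam J) :
    (jordan (ρ ⊗ₖ (1 : Matrix B B ℂ)) J).trace = 1 := by
  rw [trace_jordan, trace_kron_mul, hJ.2, mul_one, hρ.2]

end AB


section BD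
variable {A B : Type*} [Fintype A] [Fintype B] [DecidableEq A] [DecidableEq B]

lemma trB_sub (M N : Matrix (A × B) (A × B) ℂ) : trB (M - N) = trB M - trB N := by
  ext i j; simp [trB, Finset.sum_sub_distrib]

lemma trB_herm {M : Matrix (A × B) (A × B) ℂ} (h : M.IsHermitian) : (trB M).IsHermitian := by
  ext i j
  simp only [conjTranspose_apply, trB, Matrix.of_apply, star_sum]
  exact Finset.sum_congr rfl fun k _ => h.apply _ _

lemma jordan_one_smul {n : Type*} [Fintype n] [DecidableEq n] (z : ℂ) (X : Matrix n n ℂ) :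
    jordan X (z • 1) = z • X := by
  unfold jordan
  rw [Matrix.mul_smul, mul_one, smul_mul_assoc, one_mul]
  rw [← smul_add, smul_smul]
  rw [show (2:ℂ)⁻¹ * z = z * 2⁻¹ by ring, ← smul_smul]
  congr 1
  rw [show (X + X : Matrix n n ℂ) = (2:ℂ) • X by rw [two_smul]]
  rw [smul_smul]
  norm_num

lemma kron_one_entry_bound {ρ : Matrix A A ℂ} (hρ : IsState ρ) (p q : A × B) :
    ‖(ρ ⊗ₖ (1 : Matrix B B ℂ)) p q‖ ≤ 1 := by
  rcases p with ⟨i, k⟩; rcases q with ⟨j, l⟩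
  have h1 : ‖ρ i j‖ ≤ ρ.trace.re := psd_abs_entry_le hρ.1 i j
  have h2 : ρ.trace.re = 1 := by rw [hρ.2]; simp
  simp only [Matrix.kroneckerMap_apply, Matrix.one_apply]
  by_cases hkl : k = l <;> simp [hkl] <;> linarith

lemma jam_trace {J : Matrix (A × B) (A × B) ℂ} (hJ : IsJam J) :
    (ptA J).trace = (Fintype.card A : ℂ) := by
  rw [trace_ptA, ← trace_trB, hJ.2, Matrix.trace_one]

lemma jam_entry_bound {J : Matrix (A × B) (A × B) ℂ} (hJ : IsJam J) (p q : A × B) :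
    ‖J p q‖ ≤ (Fintype.card A : ℝ) := by
  have h1 : J p q = (ptA J) (q.1, p.2) (p.1, q.2) := rfl
  rw [h1]
  have := psd_abs_entry_le hJ.1 (q.1, p.2) (p.1, q.2)
  rwa [jam_trace hJ, Complex.natCast_re] at this

lemma gen_entry_bound {ρ : Matrix A A ℂ} {J : Matrix (A × B) (A × B) ℂ}
    (hρ : IsState ρ) (hJ : IsJam J) (p q : A × B) :
    ‖(jordan (ρ ⊗ₖ (1 : Matrix B B ℂ)) J) p q‖ ≤
      (Fintype.card (A × B) : ℝ) * Fintype.card A := by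
  set S := ρ ⊗ₖ (1 : Matrix B B ℂ) with hS
  have hj : (jordan S J) p q = (2:ℂ)⁻¹ * ((S * J) p q + (J * S) p q) := by
    simp [jordan]
  rw [hj, norm_mul]
  have habs2 : ‖(2:ℂ)⁻¹‖ = 2⁻¹ := by
    rw [norm_inv]; norm_num
  rw [habs2]
  have hb1 : ‖(S * J) p q‖ ≤ (Fintype.card (A × B) : ℝ) * Fintype.card A := by
    rw [Matrix.mul_apply]
    calc ‖∑ r, S p r * J r q‖ ≤ ∑ r, ‖S p r * J r q‖ :=
          norm_sum_le _ _
      _ ≤ ∑ _r : A × B, (1 : ℝ) * Fintype.card A := by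
          refine Finset.sum_le_sum fun r _ => ?_
          rw [norm_mul]
          exact mul_le_mul (kron_one_entry_bound hρ p r) (jam_entry_bound hJ r q)
            (norm_nonneg _) zero_le_one
      _ = (Fintype.card (A × B) : ℝ) * Fintype.card A := by
          rw [Finset.sum_const, Finset.card_univ]; simp
  have hb2 : ‖(J * S) p q‖ ≤ (Fintype.card (A × B) : ℝ) * Fintype.card A := by
    rw [Matrix.mul_apply]
    calc ‖∑ r, J p r * S r q‖ ≤ ∑ r, ‖J p r * S r q‖ :=
          norm_sum_le _ _
      _ ≤ ∑ _r : A × B, (Fintype.card A : ℝ) * 1 := by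
          refine Finset.sum_le_sum fun r _ => ?_
          rw [norm_mul]
          exact mul_le_mul (jam_entry_bound hJ p r) (kron_one_entry_bound hρ r q)
            (norm_nonneg _) (Nat.cast_nonneg _)
      _ = (Fintype.card (A × B) : ℝ) * Fintype.card A := by
          rw [Finset.sum_const, Finset.card_univ]; simp [mul_comm]
  calc 2⁻¹ * ‖(S * J) p q + (J * S) p q‖
      ≤ 2⁻¹ * (‖(S * J) p q‖ + ‖(J * S) p q‖) := by
        have := norm_add_le ((S * J) p q) ((J * S) p q)
        linarith
    _ ≤ (Fintype.card (A × B) : ℝ) * Fintype.card A := by linarith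

lemma trace_mul_re_bound {n : Type*} [Fintype n] (H Q : Matrix n n ℂ) (β : ℝ)
    (hQ : ∀ p q, ‖Q p q‖ ≤ β) :
    |((H * Q).trace).re| ≤ (∑ p, ∑ q, ‖H p q‖) * β := by
  have h1 : (H * Q).trace = ∑ p, ∑ q, H p q * Q q p := by
    simp [Matrix.trace, Matrix.diag, Matrix.mul_apply]
  rw [h1]
  calc |(∑ p, ∑ q, H p q * Q q p).re| ≤ ‖∑ p, ∑ q, H p q * Q q p‖ :=
        Complex.abs_re_le_norm _
    _ ≤ ∑ p, ‖∑ q, H p q * Q q p‖ := norm_sum_le _ _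
    _ ≤ ∑ p, ∑ q, ‖H p q * Q q p‖ :=
        Finset.sum_le_sum fun p _ => norm_sum_le _ _
    _ ≤ ∑ p, ∑ q, ‖H p q‖ * β := by
        refine Finset.sum_le_sum fun p _ => Finset.sum_le_sum fun q _ => ?_
        rw [norm_mul]
        exact mul_le_mul_of_nonneg_left (hQ q p) (norm_nonneg _)
    _ = (∑ p, ∑ q, ‖H p q‖) * β := by
        rw [Finset.sum_mul]
        exact Finset.sum_congr rfl fun p _ => (Finset.sum_mul _ _ _).symm

lemma herm_sq_trace_zero {n : Type*} [Fintype n] {X : Matrix n n ℂ}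
    (hX : X.IsHermitian) (h : ((X * X).trace).re = 0) : X = 0 := by
  have h1 : ((X * X).trace).re = ∑ p, ∑ q, Complex.normSq (X p q) := by
    have h2 : (X * X).trace = ∑ p, ∑ q, X p q * X q p := by
      simp [Matrix.trace, Matrix.diag, Matrix.mul_apply]
    rw [h2, Complex.re_sum]
    refine Finset.sum_congr rfl fun p _ => ?_
    rw [Complex.re_sum]
    refine Finset.sum_congr rfl fun q _ => ?_
    have : X q p = (starRingEnd ℂ) (X p q) := (hX.apply q p).symm
    rw [this, Complex.mul_conj]
    simp
  rw [h1] at h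
  have h3 : ∀ p ∈ Finset.univ (α := n), (0:ℝ) ≤ ∑ q, Complex.normSq (X p q) :=
    fun p _ => Finset.sum_nonneg fun q _ => Complex.normSq_nonneg _
  ext p q
  have h4 := (Finset.sum_eq_zero_iff_of_nonneg h3).mp h p (Finset.mem_univ p)
  have h5 := (Finset.sum_eq_zero_iff_of_nonneg
    (fun q _ => Complex.normSq_nonneg (X p q))).mp h4 q (Finset.mem_univ q)
  simpa using Complex.normSq_eq_zero.mp h5

end BD


theorem stmt7 {A B : Type*} [Fintype A] [Fintype B] [Nonempty A] [Nonempty B]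
    [DecidableEq A] [DecidableEq B]
    (Qhat : Set (Matrix (A × B) (A × B) ℂ))
    (hQhat : Qhat = { X : Matrix (A × B) (A × B) ℂ |
        ∃ (n : ℕ) (c : Fin n → ℝ) (Q : Fin n → Matrix (A × B) (A × B) ℂ),
          (∀ k, 0 ≤ c k) ∧
          (∀ k, ∃ (ρ : Matrix A A ℂ) (J : Matrix (A × B) (A × B) ℂ),
              IsState ρ ∧ IsJam J ∧ Q k = jordan (ρ ⊗ₖ (1 : Matrix B B ℂ)) J) ∧
          X = ∑ k, c k • Q k })
    (dual : Set (Matrix (A × B) (A × B) ℂ))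
    (hdual : dual = { X : Matrix (A × B) (A × B) ℂ |
        X.IsHermitian ∧ ∀ Q ∈ Qhat, 0 ≤ (Matrix.trace (X * Q)).re }) :
    (∀ X ∈ Qhat, -X ∈ Qhat → X = 0) ∧
    (∀ H : Matrix (A × B) (A × B) ℂ, H.IsHermitian →
      ∃ X ∈ Qhat, ∃ Y ∈ Qhat, H = X - Y) ∧
    (∀ X ∈ dual, -X ∈ dual → X = 0) ∧
    (∀ H : Matrix (A × B) (A × B) ℂ, H.IsHermitian →
      ∃ X ∈ dual, ∃ Y ∈ dual, H = X - Y) := by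
  -- abbreviations
  have hcA : (0:ℝ) < (Fintype.card A : ℝ) := by exact_mod_cast Fintype.card_pos
  have hcB : (0:ℝ) < (Fintype.card B : ℝ) := by exact_mod_cast Fintype.card_pos
  have hcAC : (Fintype.card A : ℂ) ≠ 0 := by
    exact_mod_cast Nat.cast_ne_zero.mpr Fintype.card_ne_zero
  have hcBC : (Fintype.card B : ℂ) ≠ 0 := by
    exact_mod_cast Nat.cast_ne_zero.mpr Fintype.card_ne_zero
  -- generator basics
  have hgenherm : ∀ (ρ : Matrix A A ℂ) (J : Matrix (A × B) (A × B) ℂ),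
      IsState ρ → IsJam J → (jordan (ρ ⊗ₖ (1 : Matrix B B ℂ)) J).IsHermitian := by
    intro ρ J hρ hJ
    exact jordan_herm (kron_one_herm hρ.1.1) (herm_of_ptA hJ.1.1)
  -- trace of cone elements
  have htrace_rep : ∀ (n : ℕ) (c : Fin n → ℝ) (Q : Fin n → Matrix (A × B) (A × B) ℂ),
      (∀ k, ∃ ρ J, IsState ρ ∧ IsJam J ∧ Q k = jordan (ρ ⊗ₖ (1 : Matrix B B ℂ)) J) →
      (∑ k, c k • Q k).trace = ((∑ k, c k : ℝ) : ℂ) := by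
    intro n c Q hQ
    rw [Matrix.trace_sum, Complex.ofReal_sum]
    refine Finset.sum_congr rfl fun k _ => ?_
    obtain ⟨ρ, J, hρ, hJ, hQk⟩ := hQ k
    rw [Matrix.trace_smul, hQk, gen_trace hρ hJ]
    simp [Complex.real_smul]
  -- membership helpers
  have hmem2 : ∀ (a b : ℝ) (Q₁ Q₂ : Matrix (A × B) (A × B) ℂ), 0 ≤ a → 0 ≤ b →
      (∃ ρ J, IsState ρ ∧ IsJam J ∧ Q₁ = jordan (ρ ⊗ₖ (1 : Matrix B B ℂ)) J) →
      (∃ ρ J, IsState ρ ∧ IsJam J ∧ Q₂ = jordan (ρ ⊗ₖ (1 : Matrix B B ℂ)) J) →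
      a • Q₁ + b • Q₂ ∈ Qhat := by
    intro a b Q₁ Q₂ ha hb h1 h2
    rw [hQhat]
    refine ⟨2, ![a, b], ![Q₁, Q₂], ?_, ?_, ?_⟩
    · intro k
      fin_cases k
      · exact ha
      · exact hb
    · intro k
      fin_cases k
      · exact h1
      · exact h2
    · simp [Fin.sum_univ_two]
  -- the standard state and Jamiolkowski matrix
  set ρ₀ : Matrix A A ℂ := (Fintype.card A : ℂ)⁻¹ • 1 with hρ₀def
  have hρ₀ : IsState ρ₀ := by
    constructor
    · rw [hρ₀def, show ((Fintype.card A : ℂ))⁻¹ = (((Fintype.card A : ℝ)⁻¹ : ℝ) : ℂ) by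
        push_cast; ring]
      exact psd_smul Matrix.PosSemidef.one (by positivity)
    · rw [hρ₀def, Matrix.trace_smul, Matrix.trace_one, smul_eq_mul,
        inv_mul_cancel₀ hcAC]
  set J₀ : Matrix (A × B) (A × B) ℂ := (Fintype.card B : ℂ)⁻¹ • 1 with hJ₀def
  have hJ₀ : IsJam J₀ := by
    constructor
    · rw [hJ₀def, ptA_smul, ptA_one,
        show ((Fintype.card B : ℂ))⁻¹ = (((Fintype.card B : ℝ)⁻¹ : ℝ) : ℂ) by push_cast; ring]
      exact psd_smul Matrix.PosSemidef.one (by positivity)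
    · rw [hJ₀def, trB_smul, trB_one, smul_smul, inv_mul_cancel₀ hcBC, one_smul]
  have hρ₀kron : ρ₀ ⊗ₖ (1 : Matrix B B ℂ) = (Fintype.card A : ℂ)⁻¹ • 1 := by
    rw [hρ₀def, smul_kronecker, one_kronecker_one]
  -- spanning of Qhat
  have hspan : ∀ H : Matrix (A × B) (A × B) ℂ, H.IsHermitian →
      ∃ X ∈ Qhat, ∃ Y ∈ Qhat, H = X - Y := by
    intro H hH
    set G : Matrix A A ℂ := trB H with hGdef
    have hGherm : G.IsHermitian := trB_herm hH
    set M : Matrix (A × B) (A × B) ℂ := H - (Fintype.card B : ℂ)⁻¹ • (G ⊗ₖ 1) with hMdef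
    have hMherm : M.IsHermitian := by
      refine hH.sub ?_
      rw [show ((Fintype.card B : ℂ))⁻¹ = (((Fintype.card B : ℝ)⁻¹ : ℝ) : ℂ) by
        push_cast; ring]
      exact herm_smul (kron_one_herm hGherm) _
    have htrBM : trB M = 0 := by
      rw [hMdef, trB_sub, trB_smul, trB_kron_one, smul_smul, inv_mul_cancel₀ hcBC, one_smul,
        sub_self]
    obtain ⟨c, hc0, hcPSD⟩ := exists_shift (ptA_herm hMherm)
    set d : ℝ := c + 1 with hddef
    have hd : 0 < d := by linarith
    have hdC : (d:ℂ) ≠ 0 := Complex.ofReal_ne_zero.mpr (ne_of_gt hd)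
    have hdPSD : (ptA M + (d:ℂ) • 1).PosSemidef := by
      have h1 : ptA M + (d:ℂ) • 1 = (ptA M + (c:ℂ) • 1) + (((1:ℝ)):ℂ) • 1 := by
        rw [hddef]; push_cast; rw [add_smul]; abel
      rw [h1]
      refine hcPSD.add ?_
      exact psd_smul Matrix.PosSemidef.one zero_le_one
    set J₁ : Matrix (A × B) (A × B) ℂ :=
      ((d * Fintype.card B : ℝ) : ℂ)⁻¹ • (M + (d:ℂ) • 1) with hJ₁def
    have hdB : ((d * Fintype.card B : ℝ) : ℂ) ≠ 0 := by
      refine Complex.ofReal_ne_zero.mpr ?_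
      positivity
    have hJ₁ : IsJam J₁ := by
      constructor
      · rw [hJ₁def, ptA_smul, ptA_add, ptA_smul, ptA_one,
          show (((d * Fintype.card B : ℝ) : ℂ))⁻¹ = ((((d * Fintype.card B)⁻¹ : ℝ)) : ℂ) by
            push_cast; ring]
        exact psd_smul hdPSD (by positivity)
      · rw [hJ₁def, trB_smul, trB_add, htrBM, trB_smul, trB_one, zero_add, smul_smul,
          smul_smul]
        rw [show (((d * Fintype.card B : ℝ) : ℂ))⁻¹ * (d:ℂ) * (Fintype.card B : ℂ) = 1 by
          push_cast; field_simp]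
        rw [one_smul]
    -- the A-side decomposition
    obtain ⟨e, he0, hePSD⟩ := exists_shift hGherm
    set P : Matrix A A ℂ := G + ((e + 1 : ℝ) : ℂ) • 1 with hPdef
    have hPpsd : P.PosSemidef := by
      have h1 : P = (G + (e:ℂ) • 1) + (((1:ℝ)):ℂ) • 1 := by
        rw [hPdef]; push_cast; rw [add_smul]; abel
      rw [h1]
      exact hePSD.add (psd_smul Matrix.PosSemidef.one zero_le_one)
    set t : ℝ := P.trace.re with htdef
    have htP : P.trace = (t:ℂ) := herm_trace_real hPpsd.1
    have ht : 0 < t := by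
      have h1 : P.trace = (G + (e:ℂ) • 1).trace + (((1:ℝ)):ℂ).re • (1 : Matrix A A ℂ).trace
          := by
        rw [hPdef]
        rw [show ((e + 1 : ℝ) : ℂ) • (1 : Matrix A A ℂ) = (e:ℂ) • 1 + ((1:ℝ):ℂ) • 1 by
          push_cast; rw [add_smul]]
        rw [← add_assoc, Matrix.trace_add]
        simp
      have h2 : 0 ≤ (G + (e:ℂ) • 1).trace.re := psd_trace_re_nonneg hePSD
      have h3 : (1 : Matrix A A ℂ).trace = (Fintype.card A : ℂ) := Matrix.trace_one
      rw [htdef, h1, h3]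
      simp only [Complex.add_re, Complex.ofReal_re]
      have : ((Fintype.card A : ℂ)).re = (Fintype.card A : ℝ) := by
        simp
      simp only [Complex.real_smul, Complex.ofReal_one, one_mul, this] at *
      nlinarith
    have htC : ((t:ℝ):ℂ) ≠ 0 := Complex.ofReal_ne_zero.mpr (ne_of_gt ht)
    set ρP : Matrix A A ℂ := ((t:ℝ):ℂ)⁻¹ • P with hρPdef
    have hρP : IsState ρP := by
      constructor
      · rw [hρPdef, show (((t:ℝ):ℂ))⁻¹ = (((t⁻¹ : ℝ)) : ℂ) by push_cast; ring]
        exact psd_smul hPpsd (by positivity)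
      · rw [hρPdef, Matrix.trace_smul, htP, smul_eq_mul, inv_mul_cancel₀ htC]
    -- generators
    set g₁ := jordan (ρ₀ ⊗ₖ (1 : Matrix B B ℂ)) J₁ with hg₁def
    set g₀ := jordan (ρ₀ ⊗ₖ (1 : Matrix B B ℂ)) J₀ with hg₀def
    set gP := jordan (ρP ⊗ₖ (1 : Matrix B B ℂ)) J₀ with hgPdef
    have hg₁ : g₁ = (Fintype.card A : ℂ)⁻¹ • J₁ := by
      rw [hg₁def, hρ₀kron, jordan_smul_one]
    have hg₀ : g₀ = (Fintype.card A : ℂ)⁻¹ • J₀ := by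
      rw [hg₀def, hρ₀kron, jordan_smul_one]
    have hgP : gP = (Fintype.card B : ℂ)⁻¹ • (ρP ⊗ₖ (1 : Matrix B B ℂ)) := by
      rw [hgPdef, hJ₀def, jordan_one_smul]
    -- scalars
    set a : ℝ := d * Fintype.card B * Fintype.card A with hadef
    have ha : 0 ≤ a := by positivity
    set s : ℝ := (e + 1) * Fintype.card A with hsdef
    have hs : 0 ≤ s := by positivity
    -- the four smul computations
    have e1 : a • g₁ = M + (d:ℂ) • 1 := by
      rw [hg₁, real_smul_eq, smul_smul, hJ₁def, smul_smul]
      rw [show ((a:ℝ):ℂ) * (Fintype.card A : ℂ)⁻¹ * ((d * Fintype.card B : ℝ) : ℂ)⁻¹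
          = 1 by rw [hadef]; push_cast; field_simp; try ring]
      rw [one_smul]
    have e0 : a • g₀ = (d:ℂ) • 1 := by
      rw [hg₀, real_smul_eq, smul_smul, hJ₀def, smul_smul]
      congr 1
      rw [hadef]; push_cast; field_simp; try ring
    have es : s • g₀ = ((e + 1 : ℝ) : ℂ) • ((Fintype.card B : ℂ)⁻¹ • 1) := by
      rw [hg₀, real_smul_eq, smul_smul, hJ₀def, smul_smul, smul_smul]
      congr 1
      rw [hsdef]; push_cast; field_simp; try ring
    have et : t • gP = (Fintype.card B : ℂ)⁻¹ • (P ⊗ₖ (1 : Matrix B B ℂ)) := by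
      rw [hgP, hρPdef, smul_kronecker, real_smul_eq, smul_smul, smul_smul]
      congr 1
      field_simp
      try ring
    have eP : P ⊗ₖ (1 : Matrix B B ℂ) = G ⊗ₖ (1 : Matrix B B ℂ) + ((e + 1 : ℝ) : ℂ) • 1 := by
      rw [hPdef, add_kronecker, smul_kronecker, one_kronecker_one]
    have key : H = (a • g₁ + t • gP) - (a • g₀ + s • g₀) := by
      rw [e1, e0, es, et, eP, smul_add, hMdef]
      rw [smul_comm ((Fintype.card B : ℂ))⁻¹ ((e + 1 : ℝ) : ℂ) (1 : Matrix (A × B) (A × B) ℂ)]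
      abel
    refine ⟨a • g₁ + t • gP, ?_, a • g₀ + s • g₀, ?_, key⟩
    · exact hmem2 a t g₁ gP ha (le_of_lt ht) ⟨ρ₀, J₁, hρ₀, hJ₁, hg₁def⟩
        ⟨ρP, J₀, hρP, hJ₀, hgPdef⟩
    · exact hmem2 a s g₀ g₀ ha hs ⟨ρ₀, J₀, hρ₀, hJ₀, hg₀def⟩ ⟨ρ₀, J₀, hρ₀, hJ₀, hg₀def⟩
  -- pointedness of Qhat
  have hpointed : ∀ X ∈ Qhat, -X ∈ Qhat → X = 0 := by
    intro X hX hnX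
    rw [hQhat] at hX hnX
    obtain ⟨n, c, Q, hc, hQ, hXeq⟩ := hX
    obtain ⟨m, c', Q', hc', hQ', hXeq'⟩ := hnX
    have h1 : X.trace = ((∑ k, c k : ℝ) : ℂ) := by rw [hXeq]; exact htrace_rep n c Q hQ
    have h2 : (-X).trace = ((∑ k, c' k : ℝ) : ℂ) := by
      rw [hXeq']; exact htrace_rep m c' Q' hQ'
    rw [Matrix.trace_neg, h1] at h2
    have h3 : (∑ k, c k) + (∑ k, c' k) = 0 := by
      have := congrArg Complex.re h2
      simp at this
      linarith
    have h4 : 0 ≤ ∑ k, c k := Finset.sum_nonneg fun k _ => hc k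
    have h5 : 0 ≤ ∑ k, c' k := Finset.sum_nonneg fun k _ => hc' k
    have h6 : ∑ k, c k = 0 := by linarith
    have h7 : ∀ k ∈ Finset.univ, c k = 0 :=
      (Finset.sum_eq_zero_iff_of_nonneg fun k _ => hc k).mp h6
    rw [hXeq]
    refine Finset.sum_eq_zero fun k _ => ?_
    rw [h7 k (Finset.mem_univ k), zero_smul]
  -- nonneg trace for cone elements
  have hQtr : ∀ X ∈ Qhat, ∃ r : ℝ, 0 ≤ r ∧ X.trace = (r:ℂ) := by
    intro X hX
    rw [hQhat] at hX
    obtain ⟨n, c, Q, hc, hQ, hXeq⟩ := hX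
    exact ⟨∑ k, c k, Finset.sum_nonneg fun k _ => hc k, by
      rw [hXeq]; exact htrace_rep n c Q hQ⟩
  -- dual spanning
  have hdualspan : ∀ H : Matrix (A × B) (A × B) ℂ, H.IsHermitian →
      ∃ X ∈ dual, ∃ Y ∈ dual, H = X - Y := by
    intro H hH
    set β : ℝ := (Fintype.card (A × B) : ℝ) * Fintype.card A with hβdef
    set SH : ℝ := ∑ p, ∑ q, ‖H p q‖ with hSHdef
    have hSH : 0 ≤ SH :=
      Finset.sum_nonneg fun p _ => Finset.sum_nonneg fun q _ => norm_nonneg _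
    set C : ℝ := SH * β with hCdef
    have hC : 0 ≤ C := by positivity
    have hkey : ∀ Qg : Matrix (A × B) (A × B) ℂ,
        (∃ ρ J, IsState ρ ∧ IsJam J ∧ Qg = jordan (ρ ⊗ₖ (1 : Matrix B B ℂ)) J) →
        0 ≤ (((H + (C:ℂ) • 1) * Qg).trace).re := by
      rintro Qg ⟨ρ, J, hρ, hJ, rfl⟩
      have hb := trace_mul_re_bound H (jordan (ρ ⊗ₖ (1 : Matrix B B ℂ)) J) β
        (gen_entry_bound hρ hJ)
      rw [← hSHdef, ← hCdef] at hb
      have h1 : ((H + (C:ℂ) • 1) * jordan (ρ ⊗ₖ (1 : Matrix B B ℂ)) J).trace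
          = (H * jordan (ρ ⊗ₖ (1 : Matrix B B ℂ)) J).trace + (C:ℂ) := by
        rw [add_mul, Matrix.trace_add, smul_mul_assoc, one_mul, Matrix.trace_smul,
          gen_trace hρ hJ, smul_eq_mul, mul_one]
      rw [h1]
      simp only [Complex.add_re, Complex.ofReal_re]
      have := abs_le.mp hb
      linarith [this.1]
    have hXd : H + (C:ℂ) • 1 ∈ dual := by
      rw [hdual]
      refine ⟨hH.add (herm_smul Matrix.isHermitian_one C), ?_⟩
      intro Q hQ
      rw [hQhat] at hQ
      obtain ⟨n, c, Qs, hc, hQs, rfl⟩ := hQ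
      rw [Matrix.mul_sum, Matrix.trace_sum, Complex.re_sum]
      refine Finset.sum_nonneg fun k _ => ?_
      rw [Matrix.mul_smul, Matrix.trace_smul]
      rw [show (c k • ((H + (C:ℂ) • 1) * Qs k).trace)
          = ((c k : ℝ):ℂ) * ((H + (C:ℂ) • 1) * Qs k).trace by simp [Complex.real_smul]]
      rw [Complex.re_ofReal_mul]
      exact mul_nonneg (hc k) (hkey (Qs k) (hQs k))
    have hYd : (C:ℂ) • (1 : Matrix (A × B) (A × B) ℂ) ∈ dual := by
      rw [hdual]
      refine ⟨herm_smul Matrix.isHermitian_one C, ?_⟩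
      intro Q hQ
      obtain ⟨r, hr, hQr⟩ := hQtr Q hQ
      rw [smul_mul_assoc, one_mul, Matrix.trace_smul, hQr]
      rw [show ((C:ℂ) • ((r:ℝ):ℂ)) = (((C * r : ℝ)):ℂ) by push_cast; simp]
      rw [Complex.ofReal_re]
      positivity
    exact ⟨H + (C:ℂ) • 1, hXd, (C:ℂ) • 1, hYd, by rw [add_sub_cancel_right]⟩
  -- dual pointedness
  have hdualpt : ∀ X ∈ dual, -X ∈ dual → X = 0 := by
    intro X hX hnX
    rw [hdual] at hX hnX
    have hzero : ∀ Q ∈ Qhat, ((X * Q).trace).re = 0 := by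
      intro Q hQ
      have h1 := hX.2 Q hQ
      have h2 := hnX.2 Q hQ
      rw [neg_mul, Matrix.trace_neg, Complex.neg_re] at h2
      linarith
    obtain ⟨Xp, hXp, Xm, hXm, hXeq⟩ := hspan X hX.1
    have h3 : ((X * X).trace).re = 0 := by
      rw [show X * X = X * Xp - X * Xm by rw [← Matrix.mul_sub, ← hXeq]]
      rw [Matrix.trace_sub, Complex.sub_re, hzero _ hXp, hzero _ hXm, sub_zero]
    exact herm_sq_trace_zero hX.1 h3
  exact ⟨hpointed, hspan, hdualpt, hdualspan⟩
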